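/- Let U be a bipartite permutation matrix of Schmidt rank r acting on ℂ^{d_A} ⊗ ℂ^{d_B}. Then the number of distinct values taken by the map sending each big column of U to the sum of its d_B × d_B blocks is at most 2^{r−1}, and this bound is tight. -/

import Mathlib

/-- A permutation matrix over `ℂ` with an arbitrary (finite) index type. -/
def IsPermMatrix {ι : Type} [DecidableEq ι] (M : Matrix ι ι ℂ) : Prop :=
  ∃ σ : Equiv.Perm ι, ∀ i j, M i j = if i = σ j then 1 else 0

/-- The `(j, k)` block (of size `dB × dB`) of a bipartite matrix on `ℂ^{dA} ⊗ ℂ^{dB}`. -/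
def blk {dA dB : ℕ} (U : Matrix (Fin dA × Fin dB) (Fin dA × Fin dB) ℂ)
    (j k : Fin dA) : Matrix (Fin dB) (Fin dB) ℂ :=
  fun b b' => U (j, b) (k, b')

/-- The Schmidt rank of a bipartite matrix: the dimension of the span of its blocks. -/
noncomputable def schmidtRank {dA dB : ℕ}
    (U : Matrix (Fin dA × Fin dB) (Fin dA × Fin dB) ℂ) : ℕ :=
  Module.finrank ℂ ↥(Submodule.span ℂ {M | ∃ j k, M = blk U j k})

/-- Evaluation of a matrix entry, as a linear map. -/
def evalLM {dB : ℕ} (a b : Fin dB) : Matrix (Fin dB) (Fin dB) ℂ →ₗ[ℂ] ℂ where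
  toFun M := M a b
  map_add' := by intros; rfl
  map_smul' := by intros; rfl

lemma card_zeroOne_le {dB : ℕ} :
    ∀ (m : ℕ) (W : Submodule ℂ (Matrix (Fin dB) (Fin dB) ℂ))
      (S : Finset (Matrix (Fin dB) (Fin dB) ℂ)),
      Module.finrank ℂ W ≤ m →
      (∀ p ∈ S, ∀ a b, p a b = 0 ∨ p a b = 1) →
      (∀ p ∈ S, ∀ q ∈ S, p - q ∈ W) → S.card ≤ 2 ^ m := by
  intro m
  induction m with
  | zero =>
    intro W S hrk _ hdiff
    simp only [Nat.le_zero] at hrk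
    rw [Submodule.finrank_eq_zero] at hrk
    subst hrk
    refine Finset.card_le_one.2 fun p hp q hq => ?_
    have := hdiff p hp q hq
    rw [Submodule.mem_bot] at this
    exact sub_eq_zero.1 this
  | succ m ih =>
    intro W S hrk h01 hdiff
    by_cases hle : Module.finrank ℂ W ≤ m
    · exact (ih W S hle h01 hdiff).trans (Nat.pow_le_pow_right (by norm_num) (Nat.le_succ m))
    by_cases hsing : ∀ p ∈ S, ∀ q ∈ S, p = q
    · exact (Finset.card_le_one.2 hsing).trans (Nat.one_le_two_pow)
    push_neg at hsing
    obtain ⟨p, hp, q, hq, hpq⟩ := hsing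
    have : ∃ a b, p a b ≠ q a b := by
      by_contra h
      push_neg at h
      exact hpq (by ext a b; exact h a b)
    obtain ⟨a, b, hab⟩ := this
    set φ := evalLM a b with hφ
    set W' := W ⊓ LinearMap.ker φ with hW'
    have hlt : W' < W := by
      refine lt_of_le_of_ne inf_le_left fun h => ?_
      have hm : p - q ∈ W' := h ▸ hdiff p hp q hq
      rw [hW', Submodule.mem_inf, LinearMap.mem_ker] at hm
      exact hab (sub_eq_zero.1 hm.2)
    have hrk' : Module.finrank ℂ W' ≤ m := by
      have := Submodule.finrank_lt_finrank_of_lt hlt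
      omega
    classical
    set S1 := S.filter (fun f => f a b = 1) with hS1
    set S0 := S.filter (fun f => ¬ f a b = 1) with hS0
    have hc1 : S1.card ≤ 2 ^ m := by
      refine ih W' S1 hrk' (fun p hp a b => h01 p (Finset.mem_filter.1 hp).1 a b) ?_
      intro p hp q hq
      rw [hS1, Finset.mem_filter] at hp hq
      refine Submodule.mem_inf.2 ⟨hdiff p hp.1 q hq.1, LinearMap.mem_ker.2 ?_⟩
      show (p - q) a b = 0
      rw [Matrix.sub_apply, hp.2, hq.2, sub_self]
    have hc0 : S0.card ≤ 2 ^ m := by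
      refine ih W' S0 hrk' (fun p hp a b => h01 p (Finset.mem_filter.1 hp).1 a b) ?_
      intro p hp q hq
      rw [hS0, Finset.mem_filter] at hp hq
      refine Submodule.mem_inf.2 ⟨hdiff p hp.1 q hq.1, LinearMap.mem_ker.2 ?_⟩
      show (p - q) a b = 0
      have h1 : p a b = 0 := (h01 p hp.1 a b).resolve_right hp.2
      have h2 : q a b = 0 := (h01 q hq.1 a b).resolve_right hq.2
      rw [Matrix.sub_apply, h1, h2, sub_self]
    have : S1.card + S0.card = S.card :=
      Finset.card_filter_add_card_filter_not
        (fun f : Matrix (Fin dB) (Fin dB) ℂ => f a b = 1)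
    rw [pow_succ]
    omega

lemma part1 (dA dB r : ℕ) (U : Matrix (Fin dA × Fin dB) (Fin dA × Fin dB) ℂ)
    (hU : IsPermMatrix U) (hr : schmidtRank U = r) :
    (Set.range (fun k : Fin dA => ∑ j : Fin dA, blk U j k)).ncard ≤ 2 ^ (r - 1) := by
  classical
  set f : Fin dA → Matrix (Fin dB) (Fin dB) ℂ := fun k => ∑ j : Fin dA, blk U j k with hfdef
  rcases Nat.eq_zero_or_pos dA with hdA | hdA
  · subst hdA
    rw [Set.range_eq_empty, Set.ncard_empty]
    positivity
  rcases Nat.eq_zero_or_pos dB with hdB | hdB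
  · subst hdB
    have hsub : (Set.range f).Subsingleton := by
      rintro x ⟨k, rfl⟩ y ⟨k', rfl⟩
      ext a b
      exact absurd a.isLt (by omega)
    exact (Set.ncard_le_one (Set.toFinite _) |>.2 hsub).trans Nat.one_le_two_pow
  obtain ⟨σ, hσ⟩ := hU
  -- the key formula for entries of f k
  have hf : ∀ k b b', f k b b' = if b = (σ (k, b')).2 then 1 else 0 := by
    intro k b b'
    have h1 : f k b b' = ∑ j, if (j, b) = σ (k, b') then (1:ℂ) else 0 := by
      rw [hfdef]
      simp only [Matrix.sum_apply, blk, hσ]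
    rw [h1]
    by_cases h : b = (σ (k, b')).2
    · rw [if_pos h]
      rw [Finset.sum_eq_single (σ (k, b')).1]
      · rw [if_pos (by rw [Prod.ext_iff]; exact ⟨rfl, h⟩)]
      · intro j _ hj
        rw [if_neg (by rw [Prod.ext_iff]; rintro ⟨h1, -⟩; exact hj h1)]
      · intro h; exact absurd (Finset.mem_univ _) h
    · rw [if_neg h]
      refine Finset.sum_eq_zero fun j _ => ?_
      rw [if_neg (by rw [Prod.ext_iff]; rintro ⟨-, h2⟩; exact h h2)]
  set b0 : Fin dB := ⟨0, hdB⟩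
  set ℓ : Matrix (Fin dB) (Fin dB) ℂ →ₗ[ℂ] ℂ := ∑ b, evalLM b b0 with hℓdef
  have hℓ : ∀ M, ℓ M = ∑ b, M b b0 := by
    intro M
    rw [hℓdef]
    simp [evalLM, LinearMap.sum_apply]; rfl
  have hℓf : ∀ k, ℓ (f k) = 1 := by
    intro k
    rw [hℓ]
    simp only [hf]
    rw [Finset.sum_eq_single (σ (k, b0)).2]
    · rw [if_pos rfl]
    · intro b _ hb; rw [if_neg hb]
    · intro h; exact absurd (Finset.mem_univ _) h
  set V : Submodule ℂ (Matrix (Fin dB) (Fin dB) ℂ) :=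
    Submodule.span ℂ {M | ∃ j k, M = blk U j k} with hVdef
  have hfV : ∀ k, f k ∈ V := by
    intro k
    exact Submodule.sum_mem _ fun j _ => Submodule.subset_span ⟨j, k, rfl⟩
  set W := V ⊓ LinearMap.ker ℓ with hWdef
  have hlt : W < V := by
    refine lt_of_le_of_ne inf_le_left fun h => ?_
    have : f ⟨0, hdA⟩ ∈ W := h.symm ▸ hfV ⟨0, hdA⟩
    rw [hWdef, Submodule.mem_inf, LinearMap.mem_ker, hℓf] at this
    exact one_ne_zero this.2
  have hrV : Module.finrank ℂ V = r := hr
  have hrkW : Module.finrank ℂ W ≤ r - 1 := by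
    have := Submodule.finrank_lt_finrank_of_lt hlt
    omega
  set S : Finset (Matrix (Fin dB) (Fin dB) ℂ) := Finset.univ.image f with hSdef
  have hrange : Set.range f = ↑S := by
    rw [hSdef, Finset.coe_image, Finset.coe_univ, Set.image_univ]
  rw [hrange, Set.ncard_coe_finset]
  refine card_zeroOne_le (r - 1) W S hrkW ?_ ?_
  · intro p hp a b
    obtain ⟨k, -, rfl⟩ := Finset.mem_image.1 hp
    rw [hf]
    split <;> simp
  · intro p hp q hq
    obtain ⟨k, -, rfl⟩ := Finset.mem_image.1 hp
    obtain ⟨k', -, rfl⟩ := Finset.mem_image.1 hq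
    refine Submodule.mem_inf.2 ⟨Submodule.sub_mem _ (hfV k) (hfV k'), LinearMap.mem_ker.2 ?_⟩
    rw [map_sub, hℓf, hℓf, sub_self]

/-! ### The construction for tightness -/

def flip2 (n : ℕ) : ℕ := 2 * (n / 2) + (1 - n % 2)

lemma flip2_div (n : ℕ) : flip2 n / 2 = n / 2 := by unfold flip2; omega
lemma flip2_flip2 (n : ℕ) : flip2 (flip2 n) = n := by unfold flip2; omega
lemma flip2_ne (n : ℕ) : flip2 n ≠ n := by unfold flip2; omega
lemma flip2_eq_iff {a b : ℕ} (h : a / 2 = b / 2) : a = flip2 b ↔ a ≠ b := by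
  unfold flip2; omega

def gmap (m : ℕ) (k : Fin (2 ^ m)) (b : Fin (2 * m + 2)) : Fin (2 * m + 2) :=
  if Nat.testBit k.val (b.val / 2) then
    ⟨flip2 b.val, by have := b.isLt; unfold flip2; omega⟩ else b

lemma gmap_val_div (m : ℕ) (k : Fin (2 ^ m)) (b : Fin (2 * m + 2)) :
    (gmap m k b : ℕ) / 2 = (b : ℕ) / 2 := by
  unfold gmap
  split
  · exact flip2_div _
  · rfl

lemma gmap_gmap (m : ℕ) (k : Fin (2 ^ m)) (b : Fin (2 * m + 2)) :
    gmap m k (gmap m k b) = b := by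
  by_cases h : Nat.testBit k.val (b.val / 2)
  · have h1 : gmap m k b = ⟨flip2 b.val, by have := b.isLt; unfold flip2; omega⟩ := by
      unfold gmap; rw [if_pos h]
    rw [h1]
    have h2 : Nat.testBit k.val ((flip2 b.val) / 2) = true := by rw [flip2_div]; exact h
    unfold gmap
    rw [if_pos h2]
    exact Fin.ext (flip2_flip2 _)
  · have h1 : gmap m k b = b := by unfold gmap; rw [if_neg h]
    rw [h1, h1]

def permFun (m : ℕ) : Fin (2 ^ m) × Fin (2 * m + 2) → Fin (2 ^ m) × Fin (2 * m + 2) :=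
  fun p => (p.1, gmap m p.1 p.2)

lemma permFun_inv (m : ℕ) : Function.Involutive (permFun m) := fun p =>
  Prod.ext rfl (gmap_gmap m p.1 p.2)

def Uc (m : ℕ) : Matrix (Fin (2 ^ m) × Fin (2 * m + 2)) (Fin (2 ^ m) × Fin (2 * m + 2)) ℂ :=
  fun p q => if p = permFun m q then 1 else 0

lemma Uc_perm (m : ℕ) : IsPermMatrix (Uc m) :=
  ⟨(permFun_inv m).toPerm, fun _ _ => rfl⟩

def Pm (m : ℕ) (k : Fin (2 ^ m)) : Matrix (Fin (2 * m + 2)) (Fin (2 * m + 2)) ℂ :=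
  fun b b' => if b = gmap m k b' then 1 else 0

lemma blk_Uc (m : ℕ) (j k : Fin (2 ^ m)) :
    blk (Uc m) j k = if j = k then Pm m k else 0 := by
  ext b b'
  by_cases h : j = k
  · subst h
    simp [blk, Uc, permFun, Pm, Prod.ext_iff]
  · simp only [blk, Uc, permFun, Prod.ext_iff, if_neg h]
    rw [if_neg (by rintro ⟨h1, -⟩; exact h h1)]
    simp [h]

lemma sum_blk_Uc (m : ℕ) (k : Fin (2 ^ m)) :
    ∑ j : Fin (2 ^ m), blk (Uc m) j k = Pm m k := by
  simp only [blk_Uc]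
  rw [Finset.sum_ite_eq' Finset.univ k (fun _ => Pm m k)]
  simp

def Dmat (m : ℕ) (i : Fin m) : Matrix (Fin (2 * m + 2)) (Fin (2 * m + 2)) ℂ :=
  fun a b => if (a : ℕ) / 2 = (i : ℕ) ∧ (b : ℕ) / 2 = (i : ℕ) then
    (if a = b then -1 else 1) else 0

/-- The decomposition of `Pm m k` in terms of the identity and the `Dmat`s. -/
lemma Pm_eq (m : ℕ) (k : Fin (2 ^ m)) :
    Pm m k = 1 + ∑ i : Fin m, (if Nat.testBit k.val i.val then (1 : ℂ) else 0) • Dmat m i := by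
  ext a b
  unfold Pm
  simp only [Matrix.add_apply, Matrix.sum_apply, Matrix.smul_apply, smul_eq_mul, Matrix.one_apply]
  by_cases hq : (a : ℕ) / 2 = (b : ℕ) / 2
  · by_cases hqm : (b : ℕ) / 2 < m
    · have hsum : ∑ i : Fin m, (if Nat.testBit k.val i.val then (1 : ℂ) else 0) * Dmat m i a b
          = (if Nat.testBit k.val ((b : ℕ) / 2) then (1 : ℂ) else 0) *
            (if a = b then -1 else 1) := by
        rw [Finset.sum_eq_single (⟨(b : ℕ) / 2, hqm⟩ : Fin m)]
        · congr 1
          unfold Dmat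
          rw [if_pos ⟨hq, rfl⟩]
        · intro i _ hi
          have : Dmat m i a b = 0 := by
            unfold Dmat
            rw [if_neg (by rintro ⟨-, h2⟩; exact hi (Fin.ext h2.symm))]
          rw [this, mul_zero]
        · intro h; exact absurd (Finset.mem_univ _) h
      rw [hsum]
      by_cases htb : Nat.testBit k.val ((b : ℕ) / 2)
      · have hg : (gmap m k b : ℕ) = flip2 b.val := by unfold gmap; rw [if_pos htb]
        rw [if_pos htb]
        by_cases hab : a = b
        · subst hab
          rw [if_pos rfl, if_pos rfl]
          rw [if_neg (fun h => (flip2_ne a.val) (by rw [← hg, ← h]))]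
          ring
        · rw [if_neg hab, if_neg hab]
          rw [if_pos (Fin.ext (by rw [hg]; exact (flip2_eq_iff hq).2 (fun h => hab (Fin.ext h))))]
          ring
      · have hg : gmap m k b = b := by unfold gmap; rw [if_neg htb]
        rw [if_neg htb, hg, zero_mul, add_zero]
    · have htb : Nat.testBit k.val ((b : ℕ) / 2) = false :=
        Nat.testBit_eq_false_of_lt
          (lt_of_lt_of_le k.isLt (Nat.pow_le_pow_right (by norm_num) (by omega)))
      have hg : gmap m k b = b := by unfold gmap; rw [htb]; rfl
      have hsum : ∀ i : Fin m, (if Nat.testBit k.val i.val then (1 : ℂ) else 0) * Dmat m i a b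
          = 0 := by
        intro i
        have : Dmat m i a b = 0 := by
          unfold Dmat
          rw [if_neg (by rintro ⟨-, h2⟩; have := i.isLt; omega)]
        rw [this, mul_zero]
      rw [Finset.sum_congr rfl (fun i _ => hsum i), Finset.sum_const_zero, add_zero, hg]
  · have hg : (gmap m k b : ℕ) / 2 = (b : ℕ) / 2 := gmap_val_div m k b
    have hne1 : a ≠ gmap m k b := fun h => hq (by rw [h]; exact hg)
    have hne2 : a ≠ b := fun h => hq (by rw [h])
    have hsum : ∀ i : Fin m, (if Nat.testBit k.val i.val then (1 : ℂ) else 0) * Dmat m i a b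
        = 0 := by
      intro i
      have : Dmat m i a b = 0 := by
        unfold Dmat
        rw [if_neg (by rintro ⟨h1, h2⟩; exact hq (h1.trans h2.symm))]
      rw [this, mul_zero]
    rw [if_neg hne1, if_neg hne2,
      Finset.sum_congr rfl (fun i _ => hsum i), Finset.sum_const_zero, add_zero]

lemma Dmat_indep (m : ℕ) :
    LinearIndependent ℂ (Fin.cons 1 (Dmat m) : Fin (m + 1) →
      Matrix (Fin (2 * m + 2)) (Fin (2 * m + 2)) ℂ) := by
  rw [Fintype.linearIndependent_iff]
  intro c hc
  have hc' : ∀ a b : Fin (2 * m + 2),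
      c 0 * (1 : Matrix (Fin (2*m+2)) (Fin (2*m+2)) ℂ) a b
        + ∑ i : Fin m, c i.succ * Dmat m i a b = 0 := by
    intro a b
    have h1 := congrFun (congrFun hc a) b
    rw [Fin.sum_univ_succ] at h1
    simpa [Matrix.sum_apply, Matrix.add_apply, Matrix.smul_apply, Matrix.zero_apply] using h1
  have h0 : c 0 = 0 := by
    have := hc' ⟨2 * m, by omega⟩ ⟨2 * m, by omega⟩
    rw [Matrix.one_apply_eq] at this
    have hz : ∀ i : Fin m, c i.succ * Dmat m i ⟨2 * m, by omega⟩ ⟨2 * m, by omega⟩ = 0 := by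
      intro i
      have : Dmat m i ⟨2 * m, by omega⟩ ⟨2 * m, by omega⟩ = 0 := by
        unfold Dmat
        rw [if_neg (by rintro ⟨h1, -⟩; have := i.isLt; simp at h1; omega)]
      rw [this, mul_zero]
    rw [Finset.sum_congr rfl (fun i _ => hz i), Finset.sum_const_zero, add_zero, mul_one] at this
    exact this
  intro i
  induction i using Fin.cases with
  | zero => exact h0
  | succ i =>
    have hi := i.isLt
    have := hc' ⟨2 * i, by omega⟩ ⟨2 * i + 1, by omega⟩
    rw [Matrix.one_apply_ne (by simp only [ne_eq, Fin.mk.injEq]; omega)] at this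
    rw [Finset.sum_eq_single i] at this
    · have hD : Dmat m i ⟨2 * i, by omega⟩ ⟨2 * i + 1, by omega⟩ = 1 := by
        unfold Dmat
        rw [if_pos (by constructor <;> simp <;> omega)]
        rw [if_neg (by simp [Fin.ext_iff])]
      rw [hD, mul_one, mul_zero, zero_add] at this
      exact this
    · intro j _ hj
      have : Dmat m j ⟨2 * i, by omega⟩ ⟨2 * i + 1, by omega⟩ = 0 := by
        unfold Dmat
        rw [if_neg (by rintro ⟨h1, -⟩; simp at h1; exact hj (Fin.ext (by omega)))]
      rw [this, mul_zero]
    · intro h; exact absurd (Finset.mem_univ _) h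

lemma Pm_inj (m : ℕ) : Function.Injective (Pm m) := by
  intro k k' h
  by_contra hne
  have : ∃ i, i < m ∧ Nat.testBit k.val i ≠ Nat.testBit k'.val i := by
    by_contra hall
    push_neg at hall
    refine hne (Fin.ext (Nat.eq_of_testBit_eq fun i => ?_))
    by_cases him : i < m
    · exact hall i him
    · rw [Nat.testBit_eq_false_of_lt
        (lt_of_lt_of_le k.isLt (Nat.pow_le_pow_right (by norm_num) (by omega))),
        Nat.testBit_eq_false_of_lt
        (lt_of_lt_of_le k'.isLt (Nat.pow_le_pow_right (by norm_num) (by omega)))]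
  obtain ⟨i, him, hbit⟩ := this
  set a : Fin (2 * m + 2) := ⟨2 * i, by omega⟩ with ha
  have hdiv : (a : ℕ) / 2 = i := by rw [ha]; exact Nat.mul_div_cancel_left i (by norm_num)
  have hentry := congrFun (congrFun h a) a
  unfold Pm at hentry
  have key : ∀ kk : Fin (2 ^ m),
      (if a = gmap m kk a then (1:ℂ) else 0)
        = if Nat.testBit kk.val i then 0 else 1 := by
    intro kk
    by_cases ht : Nat.testBit kk.val i
    · have : (gmap m kk a : ℕ) = flip2 (a : ℕ) := by
        unfold gmap; rw [hdiv, if_pos ht]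
      rw [if_neg (fun hh => flip2_ne (a:ℕ) (by rw [← this, ← hh])), if_pos ht]
    · have : gmap m kk a = a := by unfold gmap; rw [hdiv, if_neg ht]
      rw [if_pos (this.symm ▸ rfl), if_neg ht]
  rw [key k, key k'] at hentry
  rcases Bool.eq_false_or_eq_true (Nat.testBit k.val i) with h1 | h1 <;>
    rcases Bool.eq_false_or_eq_true (Nat.testBit k'.val i) with h2 | h2 <;>
      simp [h1, h2] at hentry hbit

lemma Pm_zero (m : ℕ) : Pm m ⟨0, by positivity⟩ = 1 := by
  rw [Pm_eq]
  simp [Nat.zero_testBit]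

lemma Pm_pow (m : ℕ) (i : Fin m) :
    Pm m ⟨2 ^ i.val, Nat.pow_lt_pow_right (by norm_num) i.isLt⟩ = 1 + Dmat m i := by
  rw [Pm_eq]
  congr 1
  rw [Finset.sum_eq_single i]
  · rw [if_pos Nat.testBit_two_pow_self, one_smul]
  · intro j _ hj
    rw [if_neg (by
        show ¬ ((2:ℕ) ^ i.val).testBit j.val = true
        rw [Nat.testBit_two_pow_of_ne (fun h => (hj (Fin.ext h.symm)))]; simp), zero_smul]
  · intro h; exact absurd (Finset.mem_univ _) h

lemma span_eq (m : ℕ) :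
    Submodule.span ℂ {M | ∃ j k, M = blk (Uc m) j k}
      = Submodule.span ℂ
          (Set.range (Fin.cons 1 (Dmat m) : Fin (m + 1) →
            Matrix (Fin (2 * m + 2)) (Fin (2 * m + 2)) ℂ)) := by
  apply le_antisymm
  · rw [Submodule.span_le]
    rintro M ⟨j, k, rfl⟩
    rw [SetLike.mem_coe, blk_Uc]
    by_cases h : j = k
    · rw [if_pos h, Pm_eq]
      refine Submodule.add_mem _ ?_
        (Submodule.sum_mem _ fun i _ => Submodule.smul_mem _ _ ?_)
      · exact Submodule.subset_span ⟨0, Fin.cons_zero _ _⟩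
      · exact Submodule.subset_span ⟨i.succ, Fin.cons_succ _ _ _⟩
    · rw [if_neg h]; exact Submodule.zero_mem _
  · rw [Submodule.span_le]
    rintro M ⟨i, rfl⟩
    rw [SetLike.mem_coe]
    have hblkmem : ∀ k : Fin (2 ^ m),
        Pm m k ∈ Submodule.span ℂ {M | ∃ j k, M = blk (Uc m) j k} := by
      intro k
      have : blk (Uc m) k k = Pm m k := by rw [blk_Uc, if_pos rfl]
      exact this ▸ Submodule.subset_span ⟨k, k, rfl⟩
    induction i using Fin.cases with
    | zero =>
      rw [Fin.cons_zero]
      exact Pm_zero m ▸ hblkmem ⟨0, by positivity⟩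
    | succ i =>
      rw [Fin.cons_succ]
      have hD : Dmat m i
          = Pm m ⟨2 ^ i.val, Nat.pow_lt_pow_right (by norm_num) i.isLt⟩
            - Pm m ⟨0, by positivity⟩ := by
        rw [Pm_pow, Pm_zero]
        abel
      rw [hD]
      exact Submodule.sub_mem _ (hblkmem _) (hblkmem _)

lemma rank_Uc (m : ℕ) : schmidtRank (Uc m) = m + 1 := by
  unfold schmidtRank
  rw [span_eq, finrank_span_eq_card (Dmat_indep m), Fintype.card_fin]

lemma ncard_Uc (m : ℕ) :
    (Set.range (fun k : Fin (2 ^ m) => ∑ j : Fin (2 ^ m), blk (Uc m) j k)).ncard = 2 ^ m := by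
  classical
  have h1 : (fun k : Fin (2 ^ m) => ∑ j : Fin (2 ^ m), blk (Uc m) j k) = Pm m :=
    funext (sum_blk_Uc m)
  rw [h1, ← Set.image_univ, ← Finset.coe_univ, ← Finset.coe_image, Set.ncard_coe_finset,
    Finset.card_image_of_injective _ (Pm_inj m), Finset.card_univ, Fintype.card_fin]


theorem stmt11 :
    (∀ (dA dB r : ℕ) (U : Matrix (Fin dA × Fin dB) (Fin dA × Fin dB) ℂ),
      IsPermMatrix U → schmidtRank U = r →
      (Set.range (fun k : Fin dA => ∑ j : Fin dA, blk U j k)).ncard ≤ 2 ^ (r - 1)) ∧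
    (∀ r : ℕ, 1 ≤ r →
      ∃ (dA dB : ℕ) (U : Matrix (Fin dA × Fin dB) (Fin dA × Fin dB) ℂ),
        IsPermMatrix U ∧ schmidtRank U = r ∧
        (Set.range (fun k : Fin dA => ∑ j : Fin dA, blk U j k)).ncard = 2 ^ (r - 1)) := by
  constructor
  · exact part1
  · intro r hr
    refine ⟨2 ^ (r - 1), 2 * (r - 1) + 2, Uc (r - 1), Uc_perm _, ?_, ncard_Uc _⟩
    rw [rank_Uc]
    omega
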